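/- For every nonzero vector a ∈ ℝ^N and every integer M ≥ 1, with L = N+M−1, the largest eigenvalue of the M×M autocorrelation Toeplitz matrix P(a) satisfies max_i λ_i(P(a)) ≤ max_{1 ≤ i ≤ L} | Σ_{k=1}^N a_k e^{−2πj(i−1)(k−1)/L} |²; equivalently, ρ(a) ≤ ρ_c(a), where ρ_c(a) = ( max_{1 ≤ i ≤ L} | Σ_{k=1}^N a_k e^{−2πj(i−1)(k−1)/L} |² ) / ‖a‖₂² is the normalized maximum squared modulus of the eigenvalues of the L×L circulant matrix whose first column is a padded with M−1 zeros. -/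

import Mathlib

open Finset Complex

/-- Un-normalized sample autocorrelation `R_a(τ) = ∑_{i=1}^{N-τ} a_i a_{i+τ}`. -/
noncomputable def autocorr (N : ℕ) (a : Fin N → ℝ) (τ : ℕ) : ℝ :=
  ∑ i : Fin N, if h : i.1 + τ < N then a i * a ⟨i.1 + τ, h⟩ else 0

/-- The `M × M` symmetric Toeplitz covariance matrix `P(a)` with entries `R_a(|i-j|)`. -/
noncomputable def covToeplitz (N M : ℕ) (a : Fin N → ℝ) :
    Matrix (Fin M) (Fin M) ℝ :=
  fun i j => autocorr N a (Nat.dist i.1 j.1)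

/-- The `i`-th eigenvalue `∑_{k=1}^N a_k e^{-2πj(i-1)(k-1)/L}` (0-based indices here) of the
`L × L` circulant matrix whose first column is `a` padded with `M - 1` zeros. -/
noncomputable def circEig (N M : ℕ) (a : Fin N → ℝ) (i : Fin (N + M - 1)) : ℂ :=
  ∑ k : Fin N, (a k : ℂ) *
    Complex.exp (-(2 * Real.pi * Complex.I * (i.1 : ℂ) * (k.1 : ℂ)) / ((N + M - 1 : ℕ) : ℂ))

noncomputable def ee (L t s : ℕ) : ℂ :=
  Complex.exp (-(2 * Real.pi * Complex.I * (t : ℂ) * (s : ℂ)) / ((L : ℕ) : ℂ))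

lemma circEig_eq (N M : ℕ) (a : Fin N → ℝ) (i : Fin (N + M - 1)) :
    circEig N M a i = ∑ k : Fin N, (a k : ℂ) * ee (N + M - 1) i.1 k.1 := rfl

lemma ee_mul_conj (L t s s' : ℕ) :
    ee L t s * (starRingEnd ℂ) (ee L t s') =
      Complex.exp (2 * Real.pi * Complex.I * ((s' : ℂ) - (s : ℂ)) / (L : ℂ)) ^ t := by
  rw [ee, ee, ← Complex.exp_conj, ← Complex.exp_nat_mul, ← Complex.exp_add]
  congr 1
  simp only [map_div₀, map_neg, map_mul, map_ofNat, Complex.conj_ofReal, Complex.conj_I,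
    map_natCast]
  ring

lemma ee_mul_ee (L t p q : ℕ) : ee L t p * ee L t q = ee L t (p + q) := by
  rw [ee, ee, ee, ← Complex.exp_add]
  congr 1
  push_cast
  ring

lemma ortho (L : ℕ) (hL : 0 < L) (s s' : ℕ) (hs : s < L) (hs' : s' < L) :
    ∑ t : Fin L, ee L t s * (starRingEnd ℂ) (ee L t s') =
      if s = s' then (L : ℂ) else 0 := by
  simp only [ee_mul_conj]
  set z := Complex.exp (2 * Real.pi * Complex.I * ((s' : ℂ) - (s : ℂ)) / (L : ℂ)) with hz
  rw [Fin.sum_univ_eq_sum_range (fun t => z ^ t) L]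
  have hLC : (L : ℂ) ≠ 0 := Nat.cast_ne_zero.mpr hL.ne'
  by_cases h : s = s'
  · subst h
    have : z = 1 := by rw [hz]; simp
    simp [this]
  · have hzL : z ^ L = 1 := by
      rw [hz, ← Complex.exp_nat_mul]
      have : (L : ℂ) * (2 * Real.pi * Complex.I * ((s' : ℂ) - (s : ℂ)) / (L : ℂ))
          = ((((s' : ℤ) - (s : ℤ)) : ℤ) : ℂ) * (2 * Real.pi * Complex.I) := by
        push_cast
        field_simp
      rw [this, Complex.exp_int_mul_two_pi_mul_I]
    have hzne : z ≠ 1 := by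
      intro hz1
      rw [hz, Complex.exp_eq_one_iff] at hz1
      obtain ⟨n, hn⟩ := hz1
      have h2 : (2 * Real.pi * Complex.I : ℂ) ≠ 0 := Complex.two_pi_I_ne_zero
      have : ((s' : ℂ) - (s : ℂ)) = n * L := by
        field_simp at hn
        have hn' : 2 * (Real.pi : ℂ) * Complex.I * ((s' : ℂ) - (s : ℂ))
            = 2 * (Real.pi : ℂ) * Complex.I * (n * L) := by
          rw [hn]; ring
        exact mul_left_cancel₀ h2 hn'
      have hint : (s' : ℤ) - (s : ℤ) = n * L := by exact_mod_cast this
      have hL' : (0 : ℤ) < (L : ℤ) := by exact_mod_cast hL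
      rcases lt_trichotomy n 0 with hn | hn | hn
      · have : n * (L : ℤ) ≤ -L := by nlinarith
        omega
      · subst hn
        simp at hint
        omega
      · have : (L : ℤ) ≤ n * L := by nlinarith
        omega
    rw [geom_sum_eq hzne, hzL]
    simp [h]

lemma sum_fin_ite {β : Type*} [AddCommMonoid β] (L n : ℕ) (hn : n < L) (f : Fin L → β) :
    ∑ s : Fin L, (if n = s.1 then f s else 0) = f ⟨n, hn⟩ := by
  rw [Finset.sum_eq_single (⟨n, hn⟩ : Fin L)]
  · rw [if_pos rfl]
  · intro b _ hb
    exact if_neg (fun h => hb (Fin.ext h.symm))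
  · simp

lemma parseval (L K : ℕ) (hL : 0 < L) (hK : K ≤ L) (y : Fin K → ℝ) :
    ∑ t : Fin L, ‖∑ s : Fin K, (y s : ℂ) * ee L t s‖ ^ 2
      = L * ∑ s, y s ^ 2 := by
  have key : ∑ t : Fin L, ((∑ s : Fin K, (y s : ℂ) * ee L t s) *
      (starRingEnd ℂ) (∑ s : Fin K, (y s : ℂ) * ee L t s))
      = (L : ℂ) * ∑ s : Fin K, (y s : ℂ) ^ 2 := by
    have step : ∀ t : Fin L, (∑ s : Fin K, (y s : ℂ) * ee L t s) *
        (starRingEnd ℂ) (∑ s : Fin K, (y s : ℂ) * ee L t s)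
        = ∑ s : Fin K, ∑ s' : Fin K,
            ((y s : ℂ) * (y s' : ℂ)) * (ee L t s * (starRingEnd ℂ) (ee L t s')) := by
      intro t
      rw [map_sum, Finset.sum_mul_sum]
      apply Finset.sum_congr rfl; intro s _
      apply Finset.sum_congr rfl; intro s' _
      rw [map_mul, Complex.conj_ofReal]
      ring
    simp only [step]
    rw [Finset.sum_comm]
    have : ∀ s : Fin K, ∑ t : Fin L, ∑ s' : Fin K,
        ((y s : ℂ) * (y s' : ℂ)) * (ee L t s * (starRingEnd ℂ) (ee L t s'))
        = (L : ℂ) * (y s : ℂ) ^ 2 := by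
      intro s
      rw [Finset.sum_comm]
      have inner : ∀ s' : Fin K, ∑ t : Fin L,
          ((y s : ℂ) * (y s' : ℂ)) * (ee L t s * (starRingEnd ℂ) (ee L t s'))
          = ((y s : ℂ) * (y s' : ℂ)) * (if s.1 = s'.1 then (L : ℂ) else 0) := by
        intro s'
        rw [← Finset.mul_sum, ortho L hL s.1 s'.1 (lt_of_lt_of_le s.isLt hK)
          (lt_of_lt_of_le s'.isLt hK)]
      simp only [inner, mul_ite, mul_zero, Fin.val_eq_val]
      rw [Finset.sum_ite_eq]
      simp only [Finset.mem_univ, if_true]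
      ring
    simp only [this]
    rw [← Finset.mul_sum]
  have cast_eq : ((∑ t : Fin L, ‖∑ s : Fin K, (y s : ℂ) * ee L t s‖ ^ 2 : ℝ) : ℂ)
      = ((L * ∑ s, y s ^ 2 : ℝ) : ℂ) := by
    push_cast
    calc ∑ t : Fin L, ((‖∑ s : Fin K, (y s : ℂ) * ee L t s‖ : ℝ) : ℂ) ^ 2
        = ∑ t : Fin L, ((∑ s : Fin K, (y s : ℂ) * ee L t s) *
            (starRingEnd ℂ) (∑ s : Fin K, (y s : ℂ) * ee L t s)) := by
          apply Finset.sum_congr rfl; intro t _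
          rw [Complex.mul_conj, ← Complex.sq_norm, Complex.ofReal_pow]
      _ = (L : ℂ) * ∑ s : Fin K, (y s : ℂ) ^ 2 := key
  exact_mod_cast cast_eq

lemma conv_dft (N M : ℕ) (hN : 1 ≤ N) (hM : 1 ≤ M) (a : Fin N → ℝ) (x : Fin M → ℝ) (t : ℕ) :
    (∑ k : Fin N, (a k : ℂ) * ee (N + M - 1) t k) * (∑ m : Fin M, (x m : ℂ) * ee (N + M - 1) t m)
      = ∑ s : Fin (N + M - 1),
          (((∑ k : Fin N, ∑ m : Fin M, if k.1 + m.1 = s.1 then a k * x m else 0 : ℝ)) : ℂ)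
            * ee (N + M - 1) t s := by
  have hRHS : ∀ s : Fin (N + M - 1),
      (((∑ k : Fin N, ∑ m : Fin M, if k.1 + m.1 = s.1 then a k * x m else 0 : ℝ)) : ℂ)
          * ee (N + M - 1) t s
      = ∑ k : Fin N, ∑ m : Fin M,
          (if k.1 + m.1 = s.1 then ((a k : ℂ) * (x m : ℂ)) * ee (N + M - 1) t s else 0) := by
    intro s
    push_cast
    rw [Finset.sum_mul]
    apply Finset.sum_congr rfl; intro k _
    rw [Finset.sum_mul]
    apply Finset.sum_congr rfl; intro m _
    by_cases h : k.1 + m.1 = s.1 <;> simp [h]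
  simp only [hRHS]
  rw [Finset.sum_comm]
  rw [Finset.sum_mul_sum]
  apply Finset.sum_congr rfl; intro k _
  rw [Finset.sum_comm]
  apply Finset.sum_congr rfl; intro m _
  have hlt : k.1 + m.1 < N + M - 1 := by omega
  rw [sum_fin_ite (N + M - 1) (k.1 + m.1) hlt
    (fun s => ((a k : ℂ) * (x m : ℂ)) * ee (N + M - 1) t s)]
  rw [mul_mul_mul_comm, ee_mul_ee]

lemma inner_case (N τ : ℕ) (a : Fin N → ℝ) :
    ∑ u : Fin N, ∑ v : Fin N, (if v.1 = u.1 + τ then a u * a v else 0)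
      = autocorr N a τ := by
  unfold autocorr
  apply Finset.sum_congr rfl; intro u _
  by_cases h : u.1 + τ < N
  · rw [dif_pos h]
    have := sum_fin_ite N (u.1 + τ) h (fun v => a u * a v)
    simpa [eq_comm] using this
  · rw [dif_neg h]
    apply Finset.sum_eq_zero; intro v _
    apply if_neg
    intro hc
    exact h (hc ▸ v.isLt)

lemma sum4 {R : Type*} [AddCommMonoid R] {A B C D : Type*}
    [Fintype A] [Fintype B] [Fintype C] [Fintype D]
    (f : A → B → C → D → R) :
    ∑ i : A, ∑ j : B, ∑ k : C, ∑ l : D, f i j k l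
      = ∑ k : C, ∑ l : D, ∑ i : A, ∑ j : B, f i j k l := by
  calc ∑ i : A, ∑ j : B, ∑ k : C, ∑ l : D, f i j k l
      = ∑ i : A, ∑ k : C, ∑ j : B, ∑ l : D, f i j k l :=
        Finset.sum_congr rfl fun i _ => Finset.sum_comm
    _ = ∑ k : C, ∑ i : A, ∑ j : B, ∑ l : D, f i j k l := Finset.sum_comm
    _ = ∑ k : C, ∑ i : A, ∑ l : D, ∑ j : B, f i j k l :=
        Finset.sum_congr rfl fun k _ => Finset.sum_congr rfl fun i _ => Finset.sum_comm
    _ = ∑ k : C, ∑ l : D, ∑ i : A, ∑ j : B, f i j k l :=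
        Finset.sum_congr rfl fun k _ => Finset.sum_comm

lemma energy (N M : ℕ) (hN : 1 ≤ N) (hM : 1 ≤ M) (a : Fin N → ℝ) (x : Fin M → ℝ) :
    ∑ s : Fin (N + M - 1),
        (∑ k : Fin N, ∑ m : Fin M, if k.1 + m.1 = s.1 then a k * x m else 0) ^ 2
      = ∑ m : Fin M, ∑ m' : Fin M, x m * (autocorr N a (Nat.dist m.1 m'.1) * x m') := by
  have expand : ∀ s : Fin (N + M - 1),
      (∑ k : Fin N, ∑ m : Fin M, if k.1 + m.1 = s.1 then a k * x m else 0) ^ 2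
      = ∑ k : Fin N, ∑ k' : Fin N, ∑ m : Fin M, ∑ m' : Fin M,
          (if k.1 + m.1 = s.1 ∧ k'.1 + m'.1 = s.1 then (a k * x m) * (a k' * x m') else 0) := by
    intro s
    rw [sq, Finset.sum_mul_sum]
    apply Finset.sum_congr rfl; intro k _
    apply Finset.sum_congr rfl; intro k' _
    rw [Finset.sum_mul_sum]
    apply Finset.sum_congr rfl; intro m _
    apply Finset.sum_congr rfl; intro m' _
    by_cases h1 : k.1 + m.1 = s.1 <;> by_cases h2 : k'.1 + m'.1 = s.1 <;>
      simp [h1, h2]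
  simp only [expand]
  rw [Finset.sum_comm]
  have step1 : ∀ k : Fin N,
      ∑ s : Fin (N + M - 1), ∑ k' : Fin N, ∑ m : Fin M, ∑ m' : Fin M,
        (if k.1 + m.1 = s.1 ∧ k'.1 + m'.1 = s.1 then (a k * x m) * (a k' * x m') else 0)
      = ∑ k' : Fin N, ∑ m : Fin M, ∑ m' : Fin M,
          (if k.1 + m.1 = k'.1 + m'.1 then (a k * x m) * (a k' * x m') else 0) := by
    intro k
    rw [Finset.sum_comm]
    apply Finset.sum_congr rfl; intro k' _
    rw [Finset.sum_comm]
    apply Finset.sum_congr rfl; intro m _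
    rw [Finset.sum_comm]
    apply Finset.sum_congr rfl; intro m' _
    by_cases h : k.1 + m.1 = k'.1 + m'.1
    · have hlt : k.1 + m.1 < N + M - 1 := by omega
      have base := sum_fin_ite (N + M - 1) (k.1 + m.1) hlt
        (fun _ : Fin (N + M - 1) => (a k * x m) * (a k' * x m'))
      calc ∑ s : Fin (N + M - 1),
            (if k.1 + m.1 = s.1 ∧ k'.1 + m'.1 = s.1 then (a k * x m) * (a k' * x m') else 0)
          = ∑ s : Fin (N + M - 1),
            (if k.1 + m.1 = s.1 then (a k * x m) * (a k' * x m') else 0) := by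
            apply Finset.sum_congr rfl; intro s _
            apply if_congr _ rfl rfl
            omega
        _ = (a k * x m) * (a k' * x m') := base
        _ = _ := by rw [if_pos h]
    · rw [if_neg h]
      apply Finset.sum_eq_zero; intro s _
      apply if_neg
      intro hc
      exact h (by omega)
  simp only [step1]
  rw [sum4]
  apply Finset.sum_congr rfl; intro m _
  apply Finset.sum_congr rfl; intro m' _
  rcases le_total m'.1 m.1 with hmm | hmm
  · have hd : Nat.dist m.1 m'.1 = m.1 - m'.1 := by
      simp [Nat.dist]; omega
    rw [hd]
    have key : ∀ k k' : Fin N,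
        (if k.1 + m.1 = k'.1 + m'.1 then (a k * x m) * (a k' * x m') else 0)
        = (x m * x m') * (if k'.1 = k.1 + (m.1 - m'.1) then a k * a k' else 0) := by
      intro k k'
      by_cases h : k.1 + m.1 = k'.1 + m'.1
      · rw [if_pos h, if_pos (by omega)]; ring
      · rw [if_neg h, if_neg (by omega), mul_zero]
    simp only [key, ← Finset.mul_sum]
    rw [inner_case N (m.1 - m'.1) a]
    ring
  · have hd : Nat.dist m.1 m'.1 = m'.1 - m.1 := by
      simp [Nat.dist]; omega
    rw [hd]
    have key : ∀ k k' : Fin N,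
        (if k.1 + m.1 = k'.1 + m'.1 then (a k * x m) * (a k' * x m') else 0)
        = (x m * x m') * (if k.1 = k'.1 + (m'.1 - m.1) then a k' * a k else 0) := by
      intro k k'
      by_cases h : k.1 + m.1 = k'.1 + m'.1
      · rw [if_pos h, if_pos (by omega)]; ring
      · rw [if_neg h, if_neg (by omega), mul_zero]
    simp only [key, ← Finset.mul_sum]
    rw [Finset.sum_comm, inner_case N (m'.1 - m.1) a]
    ring

lemma quad_bound (N M : ℕ) (hN : 1 ≤ N) (hM : 1 ≤ M) (a : Fin N → ℝ) (x : Fin M → ℝ)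
    (C : ℝ) (hC : ∀ i : Fin (N + M - 1), ‖circEig N M a i‖ ^ 2 ≤ C) :
    dotProduct x ((covToeplitz N M a).mulVec x) ≤ C * ∑ m, x m ^ 2 := by
  have hL : 0 < N + M - 1 := by omega
  set conv : Fin (N + M - 1) → ℝ :=
    fun s => ∑ k : Fin N, ∑ m : Fin M, if k.1 + m.1 = s.1 then a k * x m else 0 with hconv
  have hdot : dotProduct x ((covToeplitz N M a).mulVec x)
      = ∑ s : Fin (N + M - 1), conv s ^ 2 := by
    rw [hconv, energy N M hN hM a x]
    simp [dotProduct, Matrix.mulVec, covToeplitz, Finset.mul_sum]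
  have hpar1 := parseval (N + M - 1) (N + M - 1) hL le_rfl conv
  have hpar2 := parseval (N + M - 1) M hL (by omega) x
  have hprod : ∀ t : Fin (N + M - 1),
      ‖∑ s : Fin (N + M - 1), (conv s : ℂ) * ee (N + M - 1) t.1 s.1‖ ^ 2
      = ‖circEig N M a t‖ ^ 2 *
          ‖∑ m : Fin M, (x m : ℂ) * ee (N + M - 1) t.1 m.1‖ ^ 2 := by
    intro t
    rw [circEig_eq, ← mul_pow, ← norm_mul, conv_dft N M hN hM a x t.1]
  have hle : ((N + M - 1 : ℕ) : ℝ) * ∑ s, conv s ^ 2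
      ≤ C * (((N + M - 1 : ℕ) : ℝ) * ∑ m, x m ^ 2) := by
    rw [← hpar1, ← hpar2, Finset.mul_sum]
    apply Finset.sum_le_sum
    intro t _
    rw [hprod t]
    exact mul_le_mul_of_nonneg_right (hC t) (by positivity)
  have hLpos : (0 : ℝ) < ((N + M - 1 : ℕ) : ℝ) := by exact_mod_cast hL
  rw [hdot]
  rw [mul_left_comm] at hle
  exact (mul_le_mul_iff_right₀ hLpos).mp hle

theorem rho_le_rho_circ (N M : ℕ) (hN : 1 ≤ N) (hM : 1 ≤ M)
    (a : Fin N → ℝ) (ha : a ≠ 0)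
    (hP : (covToeplitz N M a).IsHermitian) :
    (⨆ i, hP.eigenvalues i) ≤ (⨆ i, ‖circEig N M a i‖ ^ 2) ∧
    (⨆ i, hP.eigenvalues i) / ∑ i, (a i) ^ 2 ≤
      (⨆ i, ‖circEig N M a i‖ ^ 2) / ∑ i, (a i) ^ 2 := by
  have hL : 0 < N + M - 1 := by omega
  haveI : Nonempty (Fin (N + M - 1)) := ⟨⟨0, hL⟩⟩
  haveI : Nonempty (Fin M) := ⟨⟨0, hM⟩⟩
  set C := ⨆ i, ‖circEig N M a i‖ ^ 2 with hCdef
  have hC : ∀ i, ‖circEig N M a i‖ ^ 2 ≤ C := by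
    intro i
    rw [hCdef]
    exact le_ciSup (f := fun i : Fin (N + M - 1) => ‖circEig N M a i‖ ^ 2)
      (Set.Finite.bddAbove (Set.finite_range _)) i
  have part1 : (⨆ i, hP.eigenvalues i) ≤ C := by
    apply ciSup_le
    intro j
    have hv := hP.eigenvalues_eq j
    have hstar : star (⇑(hP.eigenvectorBasis j) : Fin M → ℝ) = ⇑(hP.eigenvectorBasis j) := by
      ext i; simp
    rw [hstar] at hv
    have hre : ∀ r : ℝ, RCLike.re r = r := fun r => rfl
    rw [hre] at hv
    have hnorm : ∑ i, ((hP.eigenvectorBasis j) i) ^ 2 = 1 := by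
      have h1 : ‖hP.eigenvectorBasis j‖ = 1 := hP.eigenvectorBasis.orthonormal.1 j
      have h2 := PiLp.norm_sq_eq_of_L2 (fun _ : Fin M => ℝ) (hP.eigenvectorBasis j)
      rw [h1] at h2
      simp only [Real.norm_eq_abs, _root_.sq_abs, one_pow] at h2
      exact h2.symm
    calc hP.eigenvalues j
        = dotProduct (⇑(hP.eigenvectorBasis j))
            ((covToeplitz N M a).mulVec (⇑(hP.eigenvectorBasis j))) := hv
      _ ≤ C * ∑ i, ((hP.eigenvectorBasis j) i) ^ 2 :=
          quad_bound N M hN hM a _ C hC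
      _ = C := by rw [hnorm, mul_one]
  have hsum : (0 : ℝ) < ∑ i, a i ^ 2 := by
    obtain ⟨i, hi⟩ := Function.ne_iff.mp ha
    have hi' : a i ≠ 0 := by simpa using hi
    have hpos : 0 < a i ^ 2 := sq_pos_of_ne_zero hi'
    exact Finset.sum_pos' (fun i _ => sq_nonneg _) ⟨i, Finset.mem_univ i, hpos⟩
  exact ⟨part1, by gcongr⟩
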